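/- Let M, m, R, r, k be strictly positive real constants. Consider the ODE on ℝ³ given by θ̇ = (r/k)·p, φ̇ = (R/k)·p, ṗ = −rR(M sin θ + m sin φ) (two spinning wheels with point masses coupled by a belt). Let (θ₀, φ₀, 0) be an equilibrium, i.e. M sin θ₀ + m sin φ₀ = 0, and assume M r cos θ₀ + m R cos φ₀ > 0. Then (θ₀, φ₀, 0) is Lyapunov stable: for every ε > 0 there exists δ > 0 such that every differentiable curve γ : [0,∞) → ℝ³ solving the ODE with ‖γ(0) − (θ₀,φ₀,0)‖ < δ satisfies ‖γ(t) − (θ₀,φ₀,0)‖ < ε for all t ≥ 0. In particular, (0,0,0) is always Lyapunov stable, and (0,π,0) is Lyapunov stable whenever M/R > m/r. -/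

import Mathlib

open Set

private lemma hdw_fst {E F : Type*} [NormedAddCommGroup E] [NormedSpace ℝ E]
    [NormedAddCommGroup F] [NormedSpace ℝ F] {f : ℝ → E × F} {v : E × F} {s : Set ℝ} {t : ℝ}
    (h : HasDerivWithinAt f v s t) : HasDerivWithinAt (fun u => (f u).1) v.1 s t := by
  have h2 := h.hasFDerivWithinAt.fst
  simpa using h2.hasDerivWithinAt

private lemma hdw_snd {E F : Type*} [NormedAddCommGroup E] [NormedSpace ℝ E]
    [NormedAddCommGroup F] [NormedSpace ℝ F] {f : ℝ → E × F} {v : E × F} {s : Set ℝ} {t : ℝ}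
    (h : HasDerivWithinAt f v s t) : HasDerivWithinAt (fun u => (f u).2) v.2 s t := by
  have h2 := h.hasFDerivWithinAt.snd
  simpa using h2.hasDerivWithinAt

/-- Derivative of the energy-Casimir function along solutions vanishes. -/
private lemma V_deriv (M m R r k μ θ₀ φ₀ : ℝ) (hk : k ≠ 0)
    {γ : ℝ → ℝ × ℝ × ℝ} {t : ℝ} {s : Set ℝ}
    (h : HasDerivWithinAt γ ((r/k)*(γ t).2.2, (R/k)*(γ t).2.2,
      -(r*R)*(M*Real.sin (γ t).1 + m*Real.sin (γ t).2.1)) s t) :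
    HasDerivWithinAt (fun u => (γ u).2.2^2/(2*k) - M*R*Real.cos (γ u).1
      - m*r*Real.cos (γ u).2.1
      - M*Real.sin θ₀*(R*((γ u).1 - θ₀) - r*((γ u).2.1 - φ₀))
      + μ*(R*((γ u).1 - θ₀) - r*((γ u).2.1 - φ₀))^2) 0 s t := by
  have h1 := hdw_fst h
  have h2 := hdw_fst (hdw_snd h)
  have h3 := hdw_snd (hdw_snd h)
  have H := (((((h3.pow 2).div_const (2*k)).sub ((h1.cos).const_mul (M*R))).sub
      ((h2.cos).const_mul (m*r))).sub
      ((((h1.sub_const θ₀).const_mul R).sub ((h2.sub_const φ₀).const_mul r)).const_mul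
        (M*Real.sin θ₀))).add
      (((((h1.sub_const θ₀).const_mul R).sub ((h2.sub_const φ₀).const_mul r)).pow 2).const_mul μ)
  refine H.congr_deriv ?_
  field_simp
  ring

private lemma quad_core (P E D u s : ℝ) (hP : 0 < P) (hD : 4*E^2 ≤ P*D) :
    0 ≤ P*u^2 + 4*E*u*s + D*s^2 := by
  nlinarith [sq_nonneg (P*u + 2*E*s), sq_nonneg s, sq_nonneg u, hP.le, mul_pos hP hP]

private lemma quad_identity (A B R r P N E D μ c x y : ℝ)
    (hP : P = A*r^2 + B*R^2) (hN : N = R^2 + r^2) (hE : E = R*r*(A-B))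
    (hμ : 4*N^2*μ = D - (2*A*R^2 + 2*B*r^2 - P)) (hc : 4*N*c = P) :
    4*N^2*((A*(x^2/2) + B*(y^2/2) + μ*(R*x - r*y)^2) - c*(x^2+y^2))
      = P*(r*x + R*y)^2 + 4*E*(r*x + R*y)*(R*x - r*y) + D*(R*x - r*y)^2 := by
  subst hP hN hE
  linear_combination (R*x - r*y)^2*hμ - (R^2+r^2)*(x^2+y^2)*hc

/-- Energy-Casimir: for a suitable multiplier `μ` the quadratic part of the
energy-Casimir function is positive definite. -/
private lemma quad_lemma (A B R r : ℝ) (hR : 0 < R) (hr : 0 < r) (hP : 0 < A*r^2 + B*R^2) :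
    ∃ μ c : ℝ, 0 < c ∧ ∀ x y : ℝ,
      c*(x^2+y^2) ≤ A*(x^2/2) + B*(y^2/2) + μ*(R*x - r*y)^2 := by
  have hN : (0:ℝ) < R^2 + r^2 := by positivity
  obtain ⟨P, hPdef⟩ : ∃ P, P = A*r^2 + B*R^2 := ⟨_, rfl⟩
  obtain ⟨N, hNdef⟩ : ∃ N, N = R^2 + r^2 := ⟨_, rfl⟩
  obtain ⟨E, hEdef⟩ : ∃ E, E = R*r*(A-B) := ⟨_, rfl⟩
  have hP' : 0 < P := hPdef ▸ hP
  have hN' : 0 < N := hNdef ▸ hN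
  obtain ⟨D, hDdef⟩ : ∃ D, D = (8*E^2 + P^2 + (2 * |A| * R^2 + 2 * |B| * r^2)*P) / P := ⟨_, rfl⟩
  refine ⟨(D - (2*A*R^2 + 2*B*r^2 - P))/(4*N^2), P/(4*N), by positivity, fun x y => ?_⟩
  have hD : 4*E^2 ≤ P*D := by
    have hDval : P*D = 8*E^2 + P^2 + (2 * |A| * R^2 + 2 * |B| * r^2)*P := by
      rw [hDdef, mul_div_cancel₀ _ hP'.ne']
    nlinarith [abs_nonneg A, abs_nonneg B, sq_nonneg P, sq_nonneg E,
      mul_nonneg (mul_nonneg (abs_nonneg A) (sq_nonneg R)) hP'.le,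
      mul_nonneg (mul_nonneg (abs_nonneg B) (sq_nonneg r)) hP'.le]
  have hcore := quad_core P E D (r*x + R*y) (R*x - r*y) hP' hD
  have hμ : 4*N^2*((D - (2*A*R^2 + 2*B*r^2 - P))/(4*N^2)) = D - (2*A*R^2 + 2*B*r^2 - P) := by
    field_simp
  have hc : 4*N*(P/(4*N)) = P := by field_simp
  have key := quad_identity A B R r P N E D _ _ x y hPdef hNdef hEdef hμ hc
  nlinarith [key, hcore, mul_pos (mul_pos (by norm_num : (0:ℝ) < 4) hN') hN']

/-- Second-order Taylor-type lower bound for the potential terms. -/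
private lemma taylor_est (a x : ℝ) (hx : |x| ≤ 1) :
    Real.cos a * (x^2/2) - 2*x^2*|x| ≤ Real.cos a - Real.cos (a+x) - Real.sin a * x := by
  have e1 : Real.cos a - Real.cos (a+x) - Real.sin a * x
      = Real.cos a * (x^2/2) - Real.cos a * (Real.cos x - (1 - x^2/2))
        + Real.sin a * (Real.sin x - x) := by
    rw [Real.cos_add]; ring
  have h0 : (0:ℝ) ≤ |x| := abs_nonneg x
  have h2 : |x|^2 = x^2 := sq_abs x
  have h3 : x^2 ≤ |x| := by nlinarith
  have h4' : |x|^4 ≤ x^2*|x| := by nlinarith [sq_nonneg x, sq_abs x]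
  have hw1 : |Real.cos x - (1 - x^2/2)| ≤ x^2*|x| :=
    le_trans (Real.cos_bound hx) (by nlinarith [sq_nonneg x])
  have hw2 : |Real.sin x - x| ≤ x^2*|x| := by
    have ha : Real.sin x - x = (Real.sin x - (x - x^3/6)) + (-(x^3/6)) := by ring
    have hx3 : |(-(x^3/6))| = x^2*|x|/6 := by
      rw [abs_neg, abs_div, abs_of_pos (by norm_num : (0:ℝ) < 6)]
      rw [show x^3 = x^2*x by ring, abs_mul, abs_of_nonneg (sq_nonneg x)]
    calc |Real.sin x - x| ≤ |Real.sin x - (x - x^3/6)| + |(-(x^3/6))| := by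
            rw [ha]; exact abs_add_le _ _
      _ ≤ |x|^4*(5/96) + x^2*|x|/6 := by
          have h5 : |x|^5 ≤ |x|^4 := pow_le_pow_of_le_one h0 hx (by norm_num)
          rw [hx3]; linarith [Real.sin_bound hx, pow_nonneg h0 4]
      _ ≤ x^2*|x| := by nlinarith [sq_nonneg x]
  have b1 : |Real.cos a * (Real.cos x - (1 - x^2/2))| ≤ x^2*|x| := by
    rw [abs_mul]
    calc |Real.cos a| * |Real.cos x - (1 - x^2/2)| ≤ 1 * (x^2*|x|) :=
          mul_le_mul (Real.abs_cos_le_one a) hw1 (abs_nonneg _) zero_le_one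
      _ = x^2*|x| := one_mul _
  have b2 : |Real.sin a * (Real.sin x - x)| ≤ x^2*|x| := by
    rw [abs_mul]
    calc |Real.sin a| * |Real.sin x - x| ≤ 1 * (x^2*|x|) :=
          mul_le_mul (Real.abs_sin_le_one a) hw2 (abs_nonneg _) zero_le_one
      _ = x^2*|x| := one_mul _
  have b1' := abs_le.mp b1
  have b2' := abs_le.mp b2
  rw [e1]; linarith [b1'.2, b2'.1]

set_option maxHeartbeats 1000000 in
/-- Lyapunov stability of the equilibria `(θ₀, φ₀, 0)` (with `M sin θ₀ + m sin φ₀ = 0` and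
`M r cos θ₀ + m R cos φ₀ > 0`) of the ODE on `ℝ³`
`θ̇ = (r/k)p, φ̇ = (R/k)p, ṗ = −rR(M sin θ + m sin φ)`
(two spinning wheels with point masses coupled by a belt; coordinates `(θ, φ, p)`). -/
theorem stmt_11 (M m R r k : ℝ) (hM : 0 < M) (hm : 0 < m) (hR : 0 < R) (hr : 0 < r)
    (hk : 0 < k) (θ₀ φ₀ : ℝ)
    (heq : M * Real.sin θ₀ + m * Real.sin φ₀ = 0)
    (hpos : 0 < M * r * Real.cos θ₀ + m * R * Real.cos φ₀) :
    ∀ ε > 0, ∃ δ > 0, ∀ γ : ℝ → ℝ × ℝ × ℝ,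
      (∀ t ∈ Set.Ici (0 : ℝ), HasDerivWithinAt γ
        ((r / k) * (γ t).2.2, (R / k) * (γ t).2.2,
          -(r * R) * (M * Real.sin (γ t).1 + m * Real.sin (γ t).2.1)) (Set.Ici 0) t) →
      ‖γ 0 - (θ₀, φ₀, (0 : ℝ))‖ < δ → ∀ t ≥ (0 : ℝ), ‖γ t - (θ₀, φ₀, (0 : ℝ))‖ < ε := by
  intro ε hε
  -- positive definiteness data
  have hPpos : 0 < (M*R*Real.cos θ₀)*r^2 + (m*r*Real.cos φ₀)*R^2 := by
    nlinarith [mul_pos hR hr, hpos]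
  obtain ⟨μ, c, hc, hquad⟩ := quad_lemma (M*R*Real.cos θ₀) (m*r*Real.cos φ₀) R r hR hr hPpos
  -- the energy-Casimir function
  set V : ℝ × ℝ × ℝ → ℝ := fun z => z.2.2^2/(2*k) - M*R*Real.cos z.1 - m*r*Real.cos z.2.1
      - M*Real.sin θ₀*(R*(z.1 - θ₀) - r*(z.2.1 - φ₀))
      + μ*(R*(z.1 - θ₀) - r*(z.2.1 - φ₀))^2 with hVdef
  have hVcont : Continuous V := by
    simp only [hVdef]
    fun_prop
  set z₀ : ℝ × ℝ × ℝ := (θ₀, φ₀, (0:ℝ)) with hz₀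
  set β : ℝ := min (1/(2*k)) (c/2) with hβ
  have hβpos : 0 < β := lt_min (by positivity) (by positivity)
  set ρ : ℝ := min 1 (c/(4*(M*R + m*r))) with hρdef
  have hρpos : 0 < ρ := lt_min one_pos (by positivity)
  have hρ1 : ρ ≤ 1 := min_le_left _ _
  have hρc : 4*(M*R + m*r)*ρ ≤ c := by
    have h := min_le_right 1 (c/(4*(M*R + m*r)))
    have hT : 0 < 4*(M*R + m*r) := by positivity
    calc 4*(M*R + m*r)*ρ ≤ 4*(M*R + m*r)*(c/(4*(M*R + m*r))) :=
          mul_le_mul_of_nonneg_left h hT.le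
      _ = c := by field_simp
  -- the key lower bound near the equilibrium
  have hlow : ∀ z : ℝ × ℝ × ℝ, ‖z - z₀‖ ≤ ρ → V z₀ + β*‖z - z₀‖^2 ≤ V z := by
    intro z hz
    obtain ⟨x, hx⟩ : ∃ x, z.1 = θ₀ + x := ⟨z.1 - θ₀, by ring⟩
    obtain ⟨y, hy⟩ : ∃ y, z.2.1 = φ₀ + y := ⟨z.2.1 - φ₀, by ring⟩
    obtain ⟨q, hq⟩ : ∃ q, z.2.2 = q := ⟨z.2.2, rfl⟩
    have hsub1 : (z - z₀).1 = x := by simp [hz₀, hx]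
    have hsub2 : (z - z₀).2.1 = y := by simp [hz₀, hy]
    have hsub3 : (z - z₀).2.2 = q := by simp [hz₀, hq]
    have hxb : |x| ≤ ‖z - z₀‖ := by
      rw [← Real.norm_eq_abs, ← hsub1]; exact norm_fst_le _
    have hyb : |y| ≤ ‖z - z₀‖ := by
      rw [← Real.norm_eq_abs, ← hsub2]
      exact le_trans (norm_fst_le (z - z₀).2) (norm_snd_le _)
    have hqb : |q| ≤ ‖z - z₀‖ := by
      rw [← Real.norm_eq_abs, ← hsub3]
      exact le_trans (norm_snd_le (z - z₀).2) (norm_snd_le _)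
    have hxρ : |x| ≤ ρ := hxb.trans hz
    have hyρ : |y| ≤ ρ := hyb.trans hz
    have hx1 : |x| ≤ 1 := hxρ.trans hρ1
    have hy1 : |y| ≤ 1 := hyρ.trans hρ1
    -- exact expansion of V around the equilibrium, using heq
    have e : V z = V z₀ + q^2/(2*k)
        + M*R*(Real.cos θ₀ - Real.cos (θ₀+x) - Real.sin θ₀ * x)
        + m*r*(Real.cos φ₀ - Real.cos (φ₀+y) - Real.sin φ₀ * y)
        + μ*(R*x - r*y)^2 := by
      simp only [hVdef, hz₀, hx, hy, hq]
      linear_combination (r*y)*heq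
    have t1 : M*R*(Real.cos θ₀*(x^2/2) - 2*x^2*|x|)
        ≤ M*R*(Real.cos θ₀ - Real.cos (θ₀+x) - Real.sin θ₀ * x) :=
      mul_le_mul_of_nonneg_left (taylor_est θ₀ x hx1) (by positivity)
    have t2 : m*r*(Real.cos φ₀*(y^2/2) - 2*y^2*|y|)
        ≤ m*r*(Real.cos φ₀ - Real.cos (φ₀+y) - Real.sin φ₀ * y) :=
      mul_le_mul_of_nonneg_left (taylor_est φ₀ y hy1) (by positivity)
    have hq2 := hquad x y
    have hx2 : x^2*|x| ≤ x^2*ρ := mul_le_mul_of_nonneg_left hxρ (sq_nonneg x)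
    have hy2 : y^2*|y| ≤ y^2*ρ := mul_le_mul_of_nonneg_left hyρ (sq_nonneg y)
    -- ‖z - z₀‖² ≤ x² + y² + q²
    have hnorm : ‖z - z₀‖ = max |x| (max |y| |q|) := by
      rw [Prod.norm_def, Prod.norm_def, hsub1, hsub2, hsub3,
        Real.norm_eq_abs, Real.norm_eq_abs, Real.norm_eq_abs]
    have hsq : ‖z - z₀‖^2 ≤ x^2 + y^2 + q^2 := by
      rw [hnorm]
      rcases le_total |x| (max |y| |q|) with h | h
      · rw [max_eq_right h]
        rcases le_total |y| |q| with h' | h'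
        · rw [max_eq_right h']; linarith [sq_abs q, sq_nonneg x, sq_nonneg y]
        · rw [max_eq_left h']; linarith [sq_abs y, sq_nonneg x, sq_nonneg q]
      · rw [max_eq_left h]; linarith [sq_abs x, sq_nonneg y, sq_nonneg q]
    have hβ1 : β ≤ 1/(2*k) := min_le_left _ _
    have hβ2 : β ≤ c/2 := min_le_right _ _
    have hfin : β*‖z - z₀‖^2 ≤ q^2/(2*k)
        + M*R*(Real.cos θ₀*(x^2/2)) + m*r*(Real.cos φ₀*(y^2/2)) + μ*(R*x - r*y)^2
        - 2*M*R*(x^2*ρ) - 2*m*r*(y^2*ρ) := by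
      have hb : β*‖z - z₀‖^2 ≤ β*(x^2+y^2+q^2) :=
        mul_le_mul_of_nonneg_left hsq hβpos.le
      have hbq : β*q^2 ≤ q^2/(2*k) := by
        calc β*q^2 ≤ (1/(2*k))*q^2 := mul_le_mul_of_nonneg_right hβ1 (sq_nonneg q)
          _ = q^2/(2*k) := by ring
      have hbxy : β*(x^2+y^2) ≤ (c/2)*(x^2+y^2) :=
        mul_le_mul_of_nonneg_right hβ2 (by positivity)
      have hrhoxy : 2*M*R*(x^2*ρ) + 2*m*r*(y^2*ρ) ≤ (c/2)*(x^2+y^2) := by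
        have hA := mul_le_mul_of_nonneg_right hρc (by positivity : (0:ℝ) ≤ x^2+y^2)
        have n1 : 0 ≤ M*R*(y^2*ρ) := by positivity
        have n2 : 0 ≤ m*r*(x^2*ρ) := by positivity
        linarith [hA, n1, n2]
      linarith [hq2, hb, hbq, hbxy, hrhoxy]
    calc V z₀ + β*‖z - z₀‖^2
        ≤ V z₀ + q^2/(2*k) + M*R*(Real.cos θ₀*(x^2/2)) + m*r*(Real.cos φ₀*(y^2/2))
          + μ*(R*x - r*y)^2 - 2*M*R*(x^2*ρ) - 2*m*r*(y^2*ρ) := by linarith [hfin]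
      _ ≤ V z₀ + q^2/(2*k) + M*R*(Real.cos θ₀ - Real.cos (θ₀+x) - Real.sin θ₀ * x)
          + m*r*(Real.cos φ₀ - Real.cos (φ₀+y) - Real.sin φ₀ * y) + μ*(R*x - r*y)^2 := by
          have u1 := mul_le_mul_of_nonneg_left hx2 (by positivity : (0:ℝ) ≤ 2*M*R)
          have u2 := mul_le_mul_of_nonneg_left hy2 (by positivity : (0:ℝ) ≤ 2*m*r)
          linarith [t1, t2, u1, u2]
      _ = V z := e.symm
  -- choose δ
  set ε' : ℝ := min (ε/2) (ρ/2) with hε'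
  have hε'pos : 0 < ε' := lt_min (by positivity) (by positivity)
  have hε'ρ : ε' ≤ ρ := (min_le_right _ _).trans (by linarith)
  have hε'ε : ε' < ε := lt_of_le_of_lt (min_le_left _ _) (by linarith)
  obtain ⟨δ₀, hδ₀pos, hδ₀⟩ := Metric.continuousAt_iff.mp hVcont.continuousAt (β*ε'^2)
    (by positivity)
  refine ⟨min δ₀ ε', lt_min hδ₀pos hε'pos, fun γ hγ hγ0 t ht => ?_⟩
  -- conservation of V along the solution
  have hγcont : ContinuousOn γ (Ici 0) := fun u hu => (hγ u hu).continuousWithinAt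
  have hcons : ∀ s ≥ (0:ℝ), V (γ s) = V (γ 0) := by
    intro s hs
    have hcontOn : ContinuousOn (fun u => V (γ u)) (Icc 0 s) := fun u hu =>
      (hVcont.continuousAt).comp_continuousWithinAt ((hγcont u hu.1).mono Icc_subset_Ici_self)
    have hder : ∀ u ∈ Ico (0:ℝ) s, HasDerivWithinAt (fun u => V (γ u)) 0 (Ici u) u := by
      intro u hu
      have h := (hγ u hu.1).mono (Ici_subset_Ici.mpr hu.1)
      exact V_deriv M m R r k μ θ₀ φ₀ hk.ne' h
    exact constant_of_has_deriv_right_zero hcontOn hder s (mem_Icc.mpr ⟨hs, le_rfl⟩)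
  -- conclude
  by_contra hcon
  push_neg at hcon
  have hγ0' : ‖γ 0 - z₀‖ < ε' := lt_of_lt_of_le hγ0 (min_le_right _ _)
  have hgcont : ContinuousOn (fun u => ‖γ u - z₀‖) (Icc 0 t) := fun u hu =>
    (((hγcont u hu.1).mono Icc_subset_Ici_self).sub continuousWithinAt_const).norm
  have hmem : ε' ∈ Icc (‖γ 0 - z₀‖) (‖γ t - z₀‖) :=
    ⟨hγ0'.le, le_trans hε'ε.le hcon⟩
  obtain ⟨s, hsmem, hgs⟩ := intermediate_value_Icc ht hgcont hmem
  have hgs' : ‖γ s - z₀‖ = ε' := hgs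
  have hVs : V z₀ + β*ε'^2 ≤ V (γ s) := by
    have := hlow (γ s) (by rw [hgs']; exact hε'ρ)
    rwa [hgs'] at this
  have hVcons : V (γ s) = V (γ 0) := hcons s hsmem.1
  have hV0 : |V (γ 0) - V z₀| < β*ε'^2 := by
    have hd : dist (γ 0) z₀ < δ₀ := by
      rw [dist_eq_norm]; exact lt_of_lt_of_le hγ0 (min_le_left _ _)
    have := hδ₀ hd
    rwa [Real.dist_eq] at this
  have := abs_lt.mp hV0
  linarith [this.2, hVs, hVcons]
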